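/- Define polynomials Q_n ∈ K[s,t] by Q₀ = 1, Q₁ = t, and Q_{n+2} = t·Q_{n+1} − s²·Q_n for n ≥ 0, where K is a field. Then there exist infinitely many pairwise non-associated irreducible polynomials in K[s,t], each of which divides Q_n for some n ∈ ℕ; equivalently, the set of irreducible factors (up to units) of the family {Q_n}_{n∈ℕ} is infinite. -/

import Mathlib

open MvPolynomial

namespace Stmt11Aux

variable {K : Type} [Field K]

/-- substitution `s ↦ 0`. -/
noncomputable def phi (K : Type) [Field K] :
    MvPolynomial (Fin 2) K →ₐ[K] MvPolynomial (Fin 2) K :=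
  aeval ![0, X 1]

@[simp] lemma phi_X0 : phi K (X 0) = 0 := by simp [phi]
@[simp] lemma phi_X1 : phi K (X 1) = X 1 := by simp [phi]

/-- shifted sequence, `R 0 = 0`, `R (n+1) = Q n`. -/
noncomputable def R (Q : ℕ → MvPolynomial (Fin 2) K) : ℕ → MvPolynomial (Fin 2) K
  | 0 => 0
  | n + 1 => Q n

section

variable (Q : ℕ → MvPolynomial (Fin 2) K)
  (hQ0 : Q 0 = 1) (hQ1 : Q 1 = X 1)
  (hQrec : ∀ n : ℕ, Q (n + 2) = X 1 * Q (n + 1) - (X 0) ^ 2 * Q n)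

lemma hR0 : R Q 0 = 0 := rfl
lemma hR1 (h : Q 0 = 1) : R Q 1 = 1 := h

lemma prime_X0 : Prime (X 0 : MvPolynomial (Fin 2) K) := by
  rw [← MulEquiv.prime_iff ((MvPolynomial.finSuccEquiv K 1).toRingEquiv.toMulEquiv)]
  have h : ((MvPolynomial.finSuccEquiv K 1).toRingEquiv.toMulEquiv) (X 0) = Polynomial.X :=
    MvPolynomial.finSuccEquiv_X_zero
  rw [h]; exact Polynomial.prime_X

include hQ0 hQ1 hQrec

lemma hRrec : ∀ n : ℕ, R Q (n + 2) = X 1 * R Q (n + 1) - (X 0) ^ 2 * R Q n := by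
  intro n
  cases n with
  | zero => show Q 1 = X 1 * Q 0 - (X 0) ^ 2 * 0; rw [hQ0, hQ1]; ring
  | succ m => exact hQrec m

lemma Radd : ∀ m n : ℕ, R Q (m + 1 + n) =
    R Q (m + 1) * R Q (n + 1) - (X 0) ^ 2 * R Q m * R Q n := by
  intro m
  induction m with
  | zero =>
      intro n
      have h : 0 + 1 + n = n + 1 := by omega
      rw [h, hR1 Q hQ0, hR0]; ring
  | succ m ih =>
      intro n
      have h : m + 1 + 1 + n = m + 1 + (n + 1) := by omega
      rw [h, ih (n + 1), hRrec Q hQ0 hQ1 hQrec n, hRrec Q hQ0 hQ1 hQrec m]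
      ring

lemma phi_R : ∀ n : ℕ, phi K (R Q (n + 1)) = (X 1) ^ n := by
  have key : ∀ n : ℕ, phi K (R Q (n + 1)) = (X 1) ^ n ∧
      phi K (R Q (n + 2)) = (X 1) ^ (n + 1) := by
    intro n
    induction n with
    | zero =>
        constructor
        · rw [hR1 Q hQ0]; simp
        · show phi K (Q 1) = (X 1) ^ 1; rw [hQ1]; simp
    | succ m ih =>
        refine ⟨ih.2, ?_⟩
        rw [hRrec Q hQ0 hQ1 hQrec (m + 1)]
        rw [map_sub, map_mul, map_mul, map_pow, phi_X0, phi_X1, ih.2]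
        ring
  exact fun n => (key n).1

lemma X0_not_dvd : ∀ n : ℕ, ¬ (X 0 ∣ R Q (n + 1)) := by
  intro n hdvd
  have h := map_dvd (phi K) hdvd
  rw [phi_X0, phi_R Q hQ0 hQ1 hQrec] at h
  have : (X 1 : MvPolynomial (Fin 2) K) ^ n = 0 := zero_dvd_iff.mp h
  exact pow_ne_zero n (X_ne_zero 1) this

lemma neighbor : ∀ n : ℕ, ∀ f : MvPolynomial (Fin 2) K, Prime f →
    f ∣ R Q n → f ∣ R Q (n + 1) → False := by
  intro n
  induction n with
  | zero =>
      intro f hf _ h1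
      rw [hR1 Q hQ0] at h1
      exact hf.not_unit (isUnit_of_dvd_one h1)
  | succ m ih =>
      intro f hf h1 h2
      have key : (X 0 : MvPolynomial (Fin 2) K) ^ 2 * R Q m
          = X 1 * R Q (m + 1) - R Q (m + 2) := by
        rw [hRrec Q hQ0 hQ1 hQrec m]; ring
      have hd : f ∣ (X 0) ^ 2 * R Q m := by
        rw [key]; exact dvd_sub (h1.mul_left _) h2
      rcases hf.dvd_mul.mp hd with h | h
      · have hX : f ∣ X 0 := hf.dvd_of_dvd_pow h
        have : (X 0 : MvPolynomial (Fin 2) K) ∣ R Q (m + 1) :=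
          ((hf.associated_of_dvd (prime_X0 (K := K)) hX).symm.dvd).trans h1
        exact X0_not_dvd Q hQ0 hQ1 hQrec m this
      · exact ih f hf h h1

lemma step_sub : ∀ m n : ℕ, ∀ f : MvPolynomial (Fin 2) K, Prime f →
    f ∣ R Q (m + 1) → f ∣ R Q (m + 1 + n) → f ∣ R Q n := by
  intro m n f hf h1 h2
  have hd : f ∣ (X 0) ^ 2 * R Q m * R Q n := by
    have key : (X 0 : MvPolynomial (Fin 2) K) ^ 2 * R Q m * R Q n
        = R Q (m + 1) * R Q (n + 1) - R Q (m + 1 + n) := by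
      rw [Radd Q hQ0 hQ1 hQrec m n]; ring
    rw [key]; exact dvd_sub (h1.mul_right _) h2
  rcases hf.dvd_mul.mp hd with h | h
  · rcases hf.dvd_mul.mp h with h' | h'
    · have hX : f ∣ X 0 := hf.dvd_of_dvd_pow h'
      have : (X 0 : MvPolynomial (Fin 2) K) ∣ R Q (m + 1) :=
        ((hf.associated_of_dvd (prime_X0 (K := K)) hX).symm.dvd).trans h1
      exact absurd this (X0_not_dvd Q hQ0 hQ1 hQrec m)
    · exact absurd h1 (fun h1 => neighbor Q hQ0 hQ1 hQrec m f hf h' h1)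
  · exact h

lemma mul_sub : ∀ q m r : ℕ, ∀ f : MvPolynomial (Fin 2) K, Prime f →
    f ∣ R Q (m + 1) → f ∣ R Q ((m + 1) * q + r) → f ∣ R Q r := by
  intro q
  induction q with
  | zero => intro m r f hf _ h; simpa using h
  | succ p ih =>
      intro m r f hf h1 h2
      have e : (m + 1) * (p + 1) + r = m + 1 + ((m + 1) * p + r) := by ring
      rw [e] at h2
      exact ih m r f hf h1 (step_sub Q hQ0 hQ1 hQrec m _ f hf h1 h2)

lemma dvd_gcd : ∀ m n : ℕ, ∀ f : MvPolynomial (Fin 2) K, Prime f →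
    f ∣ R Q m → f ∣ R Q n → f ∣ R Q (Nat.gcd m n) := by
  intro m n
  induction m, n using Nat.gcd.induction with
  | H0 n => intro f _ _ h; simpa using h
  | H1 m n hm ih =>
      intro f hf h1 h2
      rw [Nat.gcd_rec]
      refine ih f hf ?_ h1
      obtain ⟨m', rfl⟩ : ∃ m', m = m' + 1 := ⟨m - 1, by omega⟩
      have e : (m' + 1) * (n / (m' + 1)) + n % (m' + 1) = n := Nat.div_add_mod n (m' + 1)
      exact mul_sub Q hQ0 hQ1 hQrec (n / (m' + 1)) m' (n % (m' + 1)) f hf h1 (by rw [e]; exact h2)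

lemma R_ne_zero (n : ℕ) : R Q (n + 1) ≠ 0 := by
  intro h
  have := phi_R Q hQ0 hQ1 hQrec n
  rw [h, map_zero] at this
  exact pow_ne_zero n (X_ne_zero 1) this.symm

lemma R_not_unit (n : ℕ) : ¬ IsUnit (R Q (n + 2)) := by
  intro h
  have h2 : IsUnit (constantCoeff (R Q (n + 2))) := h.map constantCoeff
  have h3 : IsUnit (constantCoeff (phi K (R Q (n + 2)))) := (h.map (phi K)).map constantCoeff
  rw [phi_R Q hQ0 hQ1 hQrec (n + 1)] at h3
  simp at h3

end

end Stmt11Aux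

open Stmt11Aux in
/-- Let `K` be a field and define `Q_n ∈ K[s,t]` by `Q₀ = 1`, `Q₁ = t`,
`Q_{n+2} = t·Q_{n+1} − s²·Q_n` (with `s, t = X 0, X 1`).  Then there are infinitely many
pairwise non-associated irreducible polynomials in `K[s,t]`, each dividing some `Q_n`. -/
theorem stmt11 (K : Type) [Field K] (Q : ℕ → MvPolynomial (Fin 2) K)
    (hQ0 : Q 0 = 1) (hQ1 : Q 1 = X 1)
    (hQrec : ∀ n : ℕ, Q (n + 2) = X 1 * Q (n + 1) - (X 0) ^ 2 * Q n) :
    ∃ T : Set (MvPolynomial (Fin 2) K), T.Infinite ∧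
      (∀ f ∈ T, Irreducible f ∧ ∃ n : ℕ, f ∣ Q n) ∧
      (∀ f ∈ T, ∀ g ∈ T, f ≠ g → ¬ Associated f g) := by
  -- for every n pick an irreducible factor of R Q (n+2)
  have hex : ∀ n : ℕ, ∃ g : MvPolynomial (Fin 2) K, Irreducible g ∧ g ∣ R Q (n + 2) := by
    intro n
    exact WfDvdMonoid.exists_irreducible_factor
      (R_not_unit Q hQ0 hQ1 hQrec n) (R_ne_zero Q hQ0 hQ1 hQrec (n + 1))
  choose F hFirr hFdvd using hex
  -- key: for distinct primes p q, F (p-2) and F (q-2) are not associated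
  have key : ∀ p q : ℕ, p.Prime → q.Prime → p ≠ q →
      ¬ Associated (F (p - 2)) (F (q - 2)) := by
    intro p q hp hq hne hassoc
    have hFp : F (p - 2) ∣ R Q p := by
      have : p - 2 + 2 = p := by have := hp.two_le; omega
      rw [← this]; exact hFdvd _
    have hFq : F (p - 2) ∣ R Q q := by
      have : q - 2 + 2 = q := by have := hq.two_le; omega
      rw [← this]; exact hassoc.dvd.trans (hFdvd _)
    have hprime : Prime (F (p - 2)) :=
      (UniqueFactorizationMonoid.irreducible_iff_prime).mp (hFirr _)
    have hg := dvd_gcd Q hQ0 hQ1 hQrec p q (F (p - 2)) hprime hFp hFq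
    rw [(Nat.coprime_primes hp hq).mpr hne] at hg
    rw [hR1 Q hQ0] at hg
    exact hprime.not_unit (isUnit_of_dvd_one hg)
  refine ⟨{ g | ∃ p : ℕ, p.Prime ∧ g = F (p - 2) }, ?_, ?_, ?_⟩
  · -- infinite
    haveI : Infinite ↥{p : ℕ | p.Prime} := Nat.infinite_setOf_prime.to_subtype
    apply Set.infinite_of_injective_forall_mem
      (f := fun p : ↥{p : ℕ | p.Prime} => F (p.1 - 2))
    · rintro ⟨p, hp⟩ ⟨q, hq⟩ h
      by_contra hne
      have hne' : p ≠ q := fun h' => hne (by simpa using h')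
      have h' : F (p - 2) = F (q - 2) := h
      exact key p q hp hq hne' (h' ▸ Associated.refl _)
    · rintro ⟨p, hp⟩
      exact ⟨p, hp, rfl⟩
  · rintro f ⟨p, hp, rfl⟩
    exact ⟨hFirr _, p - 2 + 1, hFdvd _⟩
  · rintro f ⟨p, hp, rfl⟩ g ⟨q, hq, rfl⟩ hne
    have hne' : p ≠ q := fun h => hne (by rw [h])
    exact key p q hp hq hne'
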